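/- Let f(λ,μ) be a nonzero polynomial in ℂ[λ,μ] with f(λ,μ) = −f(μ,λ), whose coefficients f_{ij} satisfy f_{ij}f_{kl} − f_{ik}f_{jl} + f_{jk}f_{il} = 0 for all i, j, k, l. Fix i₀ < j₀ with f_{i₀ j₀} ≠ 0 and define P₁(λ) = Σ_k f_{k, j₀} λ^k and P₂(λ) = −(1/f_{i₀ j₀}) Σ_k f_{k, i₀} λ^k. Suppose a ∈ ℂ[λ] satisfies a(λ) = (a_{i₀}/f_{i₀ j₀})·P₁(λ) + a_{j₀}·P₂(λ) with a_{i₀} = 0 and a_{j₀} ≠ 0. Then a polynomial b ∈ ℂ[λ] satisfies a(λ)b(μ) − a(μ)b(λ) = f(λ,μ) if and only if b(λ) = k·a(λ) − (1/a_{j₀})·P₁(λ) for some k ∈ ℂ. -/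

import Mathlib

/-- Evaluation of a bivariate polynomial f(λ,μ) at a pair of complex numbers. -/
noncomputable def ev2 (f : MvPolynomial (Fin 2) ℂ) (x y : ℂ) : ℂ :=
  MvPolynomial.eval ![x, y] f

/-- The coefficient f_{ij} of λ^i μ^j in a bivariate polynomial f(λ,μ). -/
noncomputable def coeff2 (f : MvPolynomial (Fin 2) ℂ) (i j : ℕ) : ℂ :=
  MvPolynomial.coeff (Finsupp.single 0 i + Finsupp.single 1 j) f

open Finset Polynomial in
lemma fin2_decomp (d : Fin 2 →₀ ℕ) : d = Finsupp.single 0 (d 0) + Finsupp.single 1 (d 1) := by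
  ext x
  fin_cases x <;> simp [Finsupp.single_apply]

lemma e0 (i j : ℕ) : (Finsupp.single (0:Fin 2) i + Finsupp.single 1 j : Fin 2 →₀ ℕ) 0 = i := by
  simp [Finsupp.single_apply]
lemma e1 (i j : ℕ) : (Finsupp.single (0:Fin 2) i + Finsupp.single 1 j : Fin 2 →₀ ℕ) 1 = j := by
  simp [Finsupp.single_apply]
lemma einj : Function.Injective (fun p : ℕ × ℕ =>
    (Finsupp.single (0:Fin 2) p.1 + Finsupp.single 1 p.2 : Fin 2 →₀ ℕ)) := by
  intro p q h
  have h0 := congrArg (fun d : Fin 2 →₀ ℕ => d 0) h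
  have h1 := congrArg (fun d : Fin 2 →₀ ℕ => d 1) h
  simp only [e0, e1] at h0 h1
  exact Prod.ext h0 h1

open Finset Polynomial in
lemma evalA (f : MvPolynomial (Fin 2) ℂ) (N : ℕ)
    (hN : ∀ d ∈ f.support, d 0 < N ∧ d 1 < N) (l m : ℂ) :
    ev2 f l m = ∑ i ∈ Finset.range N, ∑ j ∈ Finset.range N, coeff2 f i j * l ^ i * m ^ j := by
  rw [ev2, MvPolynomial.eval_eq']
  rw [← Finset.sum_product']
  have himg : ∑ p ∈ Finset.range N ×ˢ Finset.range N, coeff2 f p.1 p.2 * l ^ p.1 * m ^ p.2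
      = ∑ d ∈ (Finset.range N ×ˢ Finset.range N).image
          (fun p : ℕ × ℕ => (Finsupp.single (0:Fin 2) p.1 + Finsupp.single 1 p.2 : Fin 2 →₀ ℕ)),
          f.coeff d * l ^ (d 0) * m ^ (d 1) := by
    rw [Finset.sum_image (fun p _ q _ h => einj h)]
    exact Finset.sum_congr rfl fun p _ => by rw [e0, e1]; rfl
  rw [himg]
  have hstep : ∑ d ∈ f.support, f.coeff d * ∏ i, ![l, m] i ^ d i
      = ∑ d ∈ f.support, f.coeff d * l ^ (d 0) * m ^ (d 1) := by
    refine Finset.sum_congr rfl fun d _ => ?_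
    rw [Fin.prod_univ_two]
    simp only [Matrix.cons_val_zero, Matrix.cons_val_one, Matrix.head_cons]
    ring
  rw [hstep]
  refine Finset.sum_subset (fun d hd => ?_) (fun d _ hd => ?_)
  · obtain ⟨h0, h1⟩ := hN d hd
    refine Finset.mem_image.2 ⟨(d 0, d 1), ?_, (fin2_decomp d).symm⟩
    exact Finset.mem_product.2 ⟨Finset.mem_range.2 h0, Finset.mem_range.2 h1⟩
  · rw [MvPolynomial.notMem_support_iff.1 hd]; ring

/-- in the setting of STATEMENT 6, if a = (a_{i₀}/f_{i₀ j₀})·P₁ + a_{j₀}·P₂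
with a_{i₀} = 0 and a_{j₀} ≠ 0, then b solves a(λ)b(μ) − a(μ)b(λ) = f(λ,μ) iff
b = k·a − (1/a_{j₀})·P₁ for some k ∈ ℂ. -/
theorem stmt_8 (f : MvPolynomial (Fin 2) ℂ) (hf : f ≠ 0)
    (hskew : ∀ l m : ℂ, ev2 f l m = - ev2 f m l)
    (hpluecker : ∀ i j k l : ℕ,
      coeff2 f i j * coeff2 f k l - coeff2 f i k * coeff2 f j l
        + coeff2 f j k * coeff2 f i l = 0)
    (i₀ j₀ : ℕ) (hij : i₀ < j₀) (hne : coeff2 f i₀ j₀ ≠ 0)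
    (P₁ P₂ : Polynomial ℂ)
    (hP₁ : ∀ k : ℕ, P₁.coeff k = coeff2 f k j₀)
    (hP₂ : ∀ k : ℕ, P₂.coeff k = -(1 / coeff2 f i₀ j₀) * coeff2 f k i₀)
    (a : Polynomial ℂ)
    (ha : a = Polynomial.C (a.coeff i₀ / coeff2 f i₀ j₀) * P₁ + Polynomial.C (a.coeff j₀) * P₂)
    (hai : a.coeff i₀ = 0) (haj : a.coeff j₀ ≠ 0)
    (b : Polynomial ℂ) :
    (∀ l m : ℂ, a.eval l * b.eval m - a.eval m * b.eval l = ev2 f l m) ↔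
    (∃ k : ℂ, b = Polynomial.C k * a - Polynomial.C (1 / a.coeff j₀) * P₁) := by
  set c := coeff2 f i₀ j₀ with hc
  -- a = a_{j₀} • P₂
  have ha' : a = Polynomial.C (a.coeff j₀) * P₂ := by
    conv_lhs => rw [ha]
    rw [hai]; simp
  -- coefficient identity
  have hcoef : ∀ i j : ℕ, coeff2 f i j = P₁.coeff i * P₂.coeff j - P₁.coeff j * P₂.coeff i := by
    intro i j
    have hp := hpluecker i j i₀ j₀
    rw [hP₁, hP₁, hP₂, hP₂]
    field_simp
    linear_combination hp
  -- choose N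
  set N := max (f.support.sup (fun d => max (d 0) (d 1)) + 1)
      (max (P₁.natDegree + 1) (P₂.natDegree + 1)) with hNdef
  have hNsupp : ∀ d ∈ f.support, d 0 < N ∧ d 1 < N := by
    intro d hd
    have h := Finset.le_sup (f := fun d : Fin 2 →₀ ℕ => max (d 0) (d 1)) hd
    constructor
    · exact lt_of_lt_of_le (Nat.lt_succ_of_le (le_trans (le_max_left _ _) h)) (le_max_left _ _)
    · exact lt_of_lt_of_le (Nat.lt_succ_of_le (le_trans (le_max_right _ _) h)) (le_max_left _ _)
  have hN1 : P₁.natDegree < N :=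
    lt_of_lt_of_le (Nat.lt_succ_self _) (le_trans (le_max_left _ _) (le_max_right _ _))
  have hN2 : P₂.natDegree < N :=
    lt_of_lt_of_le (Nat.lt_succ_self _) (le_trans (le_max_right _ _) (le_max_right _ _))
  -- key identity
  have hkey : ∀ l m : ℂ, ev2 f l m = P₁.eval l * P₂.eval m - P₁.eval m * P₂.eval l := by
    intro l m
    rw [evalA f N hNsupp l m]
    rw [Polynomial.eval_eq_sum_range' hN1 l, Polynomial.eval_eq_sum_range' hN1 m,
        Polynomial.eval_eq_sum_range' hN2 l, Polynomial.eval_eq_sum_range' hN2 m]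
    have hswap : (∑ i ∈ Finset.range N, P₁.coeff i * m ^ i) *
        (∑ i ∈ Finset.range N, P₂.coeff i * l ^ i)
        = ∑ i ∈ Finset.range N, ∑ j ∈ Finset.range N,
            (P₁.coeff j * m ^ j) * (P₂.coeff i * l ^ i) := by
      rw [Finset.sum_mul_sum]
      exact Finset.sum_comm
    rw [Finset.sum_mul_sum, hswap, ← Finset.sum_sub_distrib]
    refine Finset.sum_congr rfl fun i _ => ?_
    rw [← Finset.sum_sub_distrib]
    refine Finset.sum_congr rfl fun j _ => ?_
    rw [hcoef i j]
    ring
  -- b₀ := -(1/a_{j₀}) P₁ solves the equation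
  have hsol : ∀ l m : ℂ,
      a.eval l * (-(1 / a.coeff j₀) * P₁.eval m) - a.eval m * (-(1 / a.coeff j₀) * P₁.eval l)
        = ev2 f l m := by
    intro l m
    rw [hkey l m]
    have hl : a.eval l = a.coeff j₀ * P₂.eval l := by conv_lhs => rw [ha', Polynomial.eval_mul, Polynomial.eval_C]
    have hm : a.eval m = a.coeff j₀ * P₂.eval m := by conv_lhs => rw [ha', Polynomial.eval_mul, Polynomial.eval_C]
    rw [hl, hm]
    field_simp
    ring
  constructor
  · -- forward
    intro h
    have hane : a ≠ 0 := fun h0 => haj (by rw [h0]; simp)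
    have hex : ∃ l₀ : ℂ, a.eval l₀ ≠ 0 := by
      by_contra hno
      push_neg at hno
      exact hane (Polynomial.funext fun x => by rw [hno x]; simp)
    obtain ⟨l₀, hl₀⟩ := hex
    set g := b + Polynomial.C (1 / a.coeff j₀) * P₁ with hg
    have hprop : ∀ l m : ℂ, a.eval l * g.eval m = a.eval m * g.eval l := by
      intro l m
      have h1 := h l m
      have h2 := hsol l m
      simp only [hg, Polynomial.eval_add, Polynomial.eval_mul, Polynomial.eval_C]
      linear_combination h1 - h2
    refine ⟨g.eval l₀ / a.eval l₀, ?_⟩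
    have hgeq : g = Polynomial.C (g.eval l₀ / a.eval l₀) * a := by
      refine Polynomial.funext fun m => ?_
      have := hprop l₀ m
      simp only [Polynomial.eval_mul, Polynomial.eval_C]
      field_simp
      linear_combination this
    rw [← hgeq, hg]
    ring
  · -- backward
    rintro ⟨k, rfl⟩
    intro l m
    simp only [Polynomial.eval_sub, Polynomial.eval_mul, Polynomial.eval_C]
    linear_combination hsol l m
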